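/- Let G=(V,D,B) be a mixed graph. Define S_0={v∈V : pa(v)=∅} and, recursively, S_{k+1}=S_k ∪ {v∈V : there exists Y ⊆ (S_k ∪ (V∖htr(v))) ∖ ({v}∪sib(v)) satisfying the half-trek criterion with respect to v}. Then G is HTC-identifiable if and only if S_k=V for some k (equivalently, the least fixed point of this monotone iteration equals V). -/

import Mathlib

open scoped Classical Matrix

/-- A mixed graph `G = (V, D, B)`: a finite vertex set `V`, a set `D` of directed
edges, and a symmetric set `B` of bidirected edges; no self-loops. -/
structure MixedGraph (V : Type*) [Fintype V] [DecidableEq V] where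
  D : Finset (V × V)
  B : Finset (V × V)
  B_symm : ∀ v w : V, (v, w) ∈ B → (w, v) ∈ B
  D_irrefl : ∀ v : V, (v, v) ∉ D
  B_irrefl : ∀ v : V, (v, v) ∉ B

namespace MixedGraph

variable {V : Type*} [Fintype V] [DecidableEq V]

/-- The parents of `v`: nodes `w` with `w → v ∈ D`. -/
def pa (G : MixedGraph V) (v : V) : Finset V :=
  Finset.univ.filter fun w => (w, v) ∈ G.D

/-- The siblings of `v`: nodes `w` with `w ↔ v ∈ B`. -/
def sib (G : MixedGraph V) (v : V) : Finset V :=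
  Finset.univ.filter fun w => (w, v) ∈ G.B

/-- A trek: a walk with no colliding arrowheads.  The field `left` lists the nodes of the
left-hand side from top (head) to source (last); `right` lists the nodes of the right-hand
side from top (head) to target (last); consecutive nodes in each list are joined by directed
edges pointing away from the head.  If `hasBidir` then the two heads are joined by a
bidirected edge, otherwise they coincide (the top node). -/
structure Trek (G : MixedGraph V) where
  left : List V
  right : List V
  left_ne : left ≠ []
  right_ne : right ≠ []
  hasBidir : Bool
  left_chain : left.Chain' fun a b => (a, b) ∈ G.D
  right_chain : right.Chain' fun a b => (a, b) ∈ G.D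
  head_cond : if hasBidir then (left.head left_ne, right.head right_ne) ∈ G.B
              else left.head left_ne = right.head right_ne

namespace Trek

variable {G : MixedGraph V}

/-- The source of a trek. -/
def source (π : G.Trek) : V := π.left.getLast π.left_ne

/-- The target of a trek. -/
def target (π : G.Trek) : V := π.right.getLast π.right_ne

/-- The left-hand side `Left(π)` of a trek, as a set of nodes. -/
def leftSet (π : G.Trek) : Finset V := π.left.toFinset

/-- The right-hand side `Right(π)` of a trek, as a set of nodes. -/
def rightSet (π : G.Trek) : Finset V := π.right.toFinset

/-- A half-trek is a trek whose left-hand side consists of exactly one node. -/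
def IsHalfTrek (π : G.Trek) : Prop := π.leftSet.card = 1

/-- The number of directed edges traversed by the trek. -/
def nEdges (π : G.Trek) : ℕ := (π.left.length - 1) + (π.right.length - 1)

end Trek

/-- `htr v`: the set of nodes `w ∉ {v} ∪ sib(v)` reachable from `v` by a half-trek
containing at least one directed edge. -/
def htr (G : MixedGraph V) (v : V) : Set V :=
  {w | w ≠ v ∧ w ∉ G.sib v ∧
    ∃ π : G.Trek, π.source = v ∧ π.target = w ∧ π.IsHalfTrek ∧ 1 ≤ π.nEdges}

/-- `f` encodes a system of treks from `Y` to `P`: treks with pairwise distinct sources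
forming `Y` and pairwise distinct targets forming `P`. -/
def IsTrekSystem (G : MixedGraph V) (Y P : Finset V) (f : V → G.Trek) : Prop :=
  (∀ y ∈ Y, (f y).source = y) ∧
  (Y.image fun y => (f y).target) = P ∧
  ∀ y ∈ Y, ∀ y' ∈ Y, y ≠ y' → (f y).target ≠ (f y').target

/-- The treks `f y`, `y ∈ Y`, have no sided intersection. -/
def NoSidedIntersection (G : MixedGraph V) (Y : Finset V) (f : V → G.Trek) : Prop :=
  ∀ y ∈ Y, ∀ y' ∈ Y, y ≠ y' →
    Disjoint (f y).leftSet (f y').leftSet ∧ Disjoint (f y).rightSet (f y').rightSet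

/-- `Y` satisfies the half-trek criterion with respect to `v`. -/
def SatisfiesHTC (G : MixedGraph V) (v : V) (Y : Finset V) : Prop :=
  Y.card = (G.pa v).card ∧
  (∀ y ∈ Y, y ≠ v ∧ y ∉ G.sib v) ∧
  ∃ f : V → G.Trek, (∀ y ∈ Y, (f y).IsHalfTrek) ∧
    G.IsTrekSystem Y (G.pa v) f ∧ G.NoSidedIntersection Y f

/-- `Y` satisfies the weak half-trek criterion with respect to `v`. -/
def SatisfiesWeakHTC (G : MixedGraph V) (v : V) (Y : Finset V) : Prop :=
  Y.card = (G.pa v).card ∧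
  (∀ y ∈ Y, y ≠ v ∧ y ∉ G.sib v) ∧
  ∃ f : V → G.Trek, (∀ y ∈ Y, y ∈ G.htr v → (f y).IsHalfTrek) ∧
    G.IsTrekSystem Y (G.pa v) f ∧ G.NoSidedIntersection Y f

/-- `G` is HTC-identifiable. -/
def HTCIdentifiable (G : MixedGraph V) : Prop :=
  ∃ Y : V → Finset V,
    (∀ v, G.SatisfiesHTC v (Y v)) ∧
    ∃ r : V → V → Prop, IsStrictTotalOrder V r ∧
      ∀ v w, w ∈ Y v → w ∈ G.htr v → r w v

/-- `G` is HTC-infinite-to-one. -/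
def HTCInfiniteToOne (G : MixedGraph V) : Prop :=
  ∀ Y : V → Finset V,
    (∃ v, ¬ G.SatisfiesHTC v (Y v)) ∨ ∃ v w, v ∈ Y w ∧ w ∈ Y v

/-- `G` is acyclic: no directed cycle can be formed from the edges in `D`. -/
def Acyclic (G : MixedGraph V) : Prop :=
  ∀ v : V, ¬ Relation.TransGen (fun a b => (a, b) ∈ G.D) v v

/-- `G` is simple: at most one edge between any pair of nodes. -/
def Simple (G : MixedGraph V) : Prop :=
  (∀ e ∈ G.D, e ∉ G.B) ∧ ∀ v w : V, (v, w) ∈ G.D → (w, v) ∉ G.D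

/-- `ℝ^D_reg`: real matrices supported on `D` with `I - Λ` invertible. -/
def RDreg (G : MixedGraph V) : Set (Matrix V V ℝ) :=
  {Λ | (∀ v w, (v, w) ∉ G.D → Λ v w = 0) ∧ IsUnit (1 - Λ).det}

/-- `PD(B)`: positive definite symmetric matrices supported on the diagonal and `B`. -/
def PDB (G : MixedGraph V) : Set (Matrix V V ℝ) :=
  {Ω | Ω.PosDef ∧ ∀ v w, v ≠ w → (v, w) ∉ G.B → Ω v w = 0}

/-- The parameter space `Θ = ℝ^D_reg × PD(B)`. -/
def Theta (G : MixedGraph V) : Set (Matrix V V ℝ × Matrix V V ℝ) :=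
  {θ | θ.1 ∈ G.RDreg ∧ θ.2 ∈ G.PDB}

/-- The parametrization `φ(Λ, Ω) = (I-Λ)^{-T} Ω (I-Λ)^{-1}`. -/
noncomputable def phi {R : Type*} [CommRing R] (Λ Ω : Matrix V V R) : Matrix V V R :=
  ((1 - Λ)⁻¹)ᵀ * Ω * (1 - Λ)⁻¹

/-- Evaluation of a polynomial in the coordinates `λ_vw` (left summand) and `ω_vw`
(right summand) at a parameter point `θ = (Λ, Ω)`. -/
noncomputable def evalParam (θ : Matrix V V ℝ × Matrix V V ℝ)
    (p : MvPolynomial ((V × V) ⊕ (V × V)) ℝ) : ℝ :=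
  MvPolynomial.eval (Sum.elim (fun e => θ.1 e.1 e.2) (fun e => θ.2 e.1 e.2)) p

/-- `V₀` is a proper algebraic subset of `Θ`: the intersection with `Θ` of the zero set of a
polynomial in the coordinates that does not vanish identically on `Θ`. -/
def IsProperAlgebraic (G : MixedGraph V)
    (V₀ : Set (Matrix V V ℝ × Matrix V V ℝ)) : Prop :=
  ∃ p : MvPolynomial ((V × V) ⊕ (V × V)) ℝ,
    (∃ θ ∈ G.Theta, evalParam θ p ≠ 0) ∧
    V₀ = {θ ∈ G.Theta | evalParam θ p = 0}

/-- Evaluation of a polynomial in the entries of a covariance matrix. -/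
noncomputable def evalAtCov (S : Matrix V V ℝ) (p : MvPolynomial (V × V) ℝ) : ℝ :=
  MvPolynomial.eval (fun e => S e.1 e.2) p

/-- `G` is rationally identifiable: some rational map `ψ` (each coordinate a quotient of
polynomials in the entries of the covariance matrix) satisfies `ψ ∘ φ_G = id` off a proper
algebraic subset of `Θ`. -/
def RationallyIdentifiable (G : MixedGraph V) : Prop :=
  ∃ V₀, G.IsProperAlgebraic V₀ ∧
    ∃ p q : ((V × V) ⊕ (V × V)) → MvPolynomial (V × V) ℝ,
      ∀ θ ∈ G.Theta \ V₀,
        (∀ i, evalAtCov (phi θ.1 θ.2) (q i) ≠ 0) ∧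
        (∀ v w : V, θ.1 v w * evalAtCov (phi θ.1 θ.2) (q (Sum.inl (v, w)))
            = evalAtCov (phi θ.1 θ.2) (p (Sum.inl (v, w)))) ∧
        (∀ v w : V, θ.2 v w * evalAtCov (phi θ.1 θ.2) (q (Sum.inr (v, w)))
            = evalAtCov (phi θ.1 θ.2) (p (Sum.inr (v, w))))

/-- `G` is generically identifiable: `φ_G` is injective off a proper algebraic subset. -/
def GenericallyIdentifiable (G : MixedGraph V) : Prop :=
  ∃ V₀, G.IsProperAlgebraic V₀ ∧
    Set.InjOn (fun θ : Matrix V V ℝ × Matrix V V ℝ => phi θ.1 θ.2) (G.Theta \ V₀)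

/-- `φ_G` is generically infinite-to-one. -/
def GenInfiniteToOne (G : MixedGraph V) : Prop :=
  ∃ V₀, G.IsProperAlgebraic V₀ ∧
    ∀ θ ∈ G.Theta \ V₀,
      {θ' ∈ G.Theta | phi θ'.1 θ'.2 = phi θ.1 θ.2}.Infinite

end MixedGraph

namespace MixedGraph

variable {V : Type*} [Fintype V] [DecidableEq V]

/-- The sets computed by the algorithm for testing HTC-identifiability: `S 0` consists of
the nodes without parents, and `S (k+1)` adds all nodes `v` for which some set of allowed
nodes `Y ⊆ (S k ∪ (V ∖ htr(v))) ∖ ({v} ∪ sib(v))` satisfies the half-trek criterion with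
respect to `v`. -/
def algSet (G : MixedGraph V) : ℕ → Set V
  | 0 => {v | G.pa v = ∅}
  | k + 1 => G.algSet k ∪
      {v | ∃ Y : Finset V,
        ↑Y ⊆ (G.algSet k ∪ (G.htr v)ᶜ) \ ({v} ∪ (↑(G.sib v) : Set V)) ∧
        G.SatisfiesHTC v Y}

lemma algSet_subset_succ (G : MixedGraph V) (k : ℕ) :
    G.algSet k ⊆ G.algSet (k + 1) := by
  intro v hv
  exact Or.inl hv

lemma algSet_mono (G : MixedGraph V) {k l : ℕ} (h : k ≤ l) :
    G.algSet k ⊆ G.algSet l := by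
  induction l with
  | zero => simpa [Nat.le_zero.mp h]
  | succ n ih =>
      rcases Nat.lt_or_ge k (n + 1) with h' | h'
      · exact (ih (Nat.lt_succ_iff.mp h')).trans (G.algSet_subset_succ n)
      · have : k = n + 1 := le_antisymm h h'
        simp [this]

/-- The trivial trek consisting of a single node. -/
def trivTrek (G : MixedGraph V) (v : V) : G.Trek where
  left := [v]
  right := [v]
  left_ne := by simp
  right_ne := by simp
  hasBidir := false
  left_chain := List.isChain_singleton _
  right_chain := List.isChain_singleton _
  head_cond := by simp

lemma satisfiesHTC_of_pa_empty (G : MixedGraph V) (v : V) (h : G.pa v = ∅) :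
    G.SatisfiesHTC v ∅ := by
  refine ⟨by simp [h], by simp, fun w => G.trivTrek w, by simp, ⟨by simp, by simp [h], by simp⟩,
    by simp [NoSidedIntersection]⟩

end MixedGraph

/-- `G` is HTC-identifiable if and only if the monotone iteration reaches all of `V`. -/
theorem htc_identifiable_iff_algorithm {V : Type*} [Fintype V] [DecidableEq V]
    (G : MixedGraph V) :
    G.HTCIdentifiable ↔ ∃ k : ℕ, G.algSet k = Set.univ := by
  constructor
  · rintro ⟨Y, hY, r, hr, hord⟩
    haveI := hr
    have wf : WellFounded r := Finite.wellFounded_of_trans_of_irrefl r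
    have key : ∀ v : V, ∃ k, v ∈ G.algSet k := by
      intro v
      induction v using wf.induction with
      | _ v IH =>
        set g : V → ℕ := fun w => if h : r w v then (IH w h).choose else 0 with hg
        set K : ℕ := Finset.univ.sup g with hK
        refine ⟨K + 1, Or.inr ⟨Y v, ?_, hY v⟩⟩
        intro w hw
        have hw' : w ∈ Y v := by simpa using hw
        have hwv := (hY v).2.1 w hw'
        constructor
        · by_cases hhtr : w ∈ G.htr v
          · left
            have hrwv : r w v := hord v w hw' hhtr
            have hmem : w ∈ G.algSet (g w) := by
              simp only [hg, dif_pos hrwv]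
              exact (IH w hrwv).choose_spec
            exact G.algSet_mono (Finset.le_sup (Finset.mem_univ w)) hmem
          · exact Or.inr hhtr
        · intro hmem
          rcases hmem with h | h
          · exact hwv.1 h
          · exact hwv.2 (by simpa using h)
    refine ⟨Finset.univ.sup fun v => (key v).choose, ?_⟩
    apply Set.eq_univ_iff_forall.mpr
    intro v
    exact G.algSet_mono (Finset.le_sup (Finset.mem_univ v)) (key v).choose_spec
  · rintro ⟨K, hK⟩
    have hex : ∀ v : V, ∃ k, v ∈ G.algSet k := fun v => ⟨K, hK ▸ Set.mem_univ v⟩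
    set n : V → ℕ := fun v => Nat.find (hex v) with hn
    have hnspec : ∀ v, v ∈ G.algSet (n v) := fun v => Nat.find_spec (hex v)
    have hchoice : ∀ v : V, ∃ Yv : Finset V,
        G.SatisfiesHTC v Yv ∧ ∀ w ∈ Yv, w ∈ G.htr v → n w < n v := by
      intro v
      rcases hm : n v with _ | m
      · refine ⟨∅, G.satisfiesHTC_of_pa_empty v ?_, by simp⟩
        have := hnspec v
        rw [hm] at this
        exact this
      · have hmem : v ∈ G.algSet (m + 1) := by rw [← hm]; exact hnspec v
        have hnot : v ∉ G.algSet m := Nat.find_min (hex v) (show m < n v by omega)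
        rcases hmem with h | h
        · exact absurd h hnot
        · obtain ⟨Yv, hsub, hHTC⟩ := h
          refine ⟨Yv, hHTC, ?_⟩
          intro w hw hhtr
          have := hsub (by simpa using hw)
          rcases this.1 with h' | h'
          · have h1 : n w ≤ m := Nat.find_le h'
            exact Nat.lt_succ_of_le h1
          · exact absurd hhtr h'
    choose Yv hYv1 hYv2 using hchoice
    set r : V → V → Prop := fun w v => n w < n v ∨ (n w = n v ∧ WellOrderingRel w v)
      with hrdef
    haveI hWO : IsWellOrder V WellOrderingRel := WellOrderingRel.isWellOrder
    have htri : ∀ a b : V, r a b ∨ a = b ∨ r b a := by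
      intro a b
      rcases lt_trichotomy (n a) (n b) with h | h | h
      · exact Or.inl (Or.inl h)
      · rcases trichotomous_of WellOrderingRel a b with h' | h' | h'
        · exact Or.inl (Or.inr ⟨h, h'⟩)
        · exact Or.inr (Or.inl h')
        · exact Or.inr (Or.inr (Or.inr ⟨h.symm, h'⟩))
      · exact Or.inr (Or.inr (Or.inl h))
    have hirr : ∀ a : V, ¬ r a a := by
      intro a h
      rcases h with h | ⟨_, h⟩
      · omega
      · exact irrefl_of WellOrderingRel a h
    have htrans : ∀ a b c : V, r a b → r b c → r a c := by
      intro a b c hab hbc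
      rcases hab with h1 | ⟨h1, h1'⟩ <;> rcases hbc with h2 | ⟨h2, h2'⟩
      · exact Or.inl (h1.trans h2)
      · exact Or.inl (h2 ▸ h1)
      · exact Or.inl (h1 ▸ h2)
      · exact Or.inr ⟨h1.trans h2, trans_of WellOrderingRel h1' h2'⟩
    haveI : IsTrichotomous V r := ⟨fun a b hab hba => ((htri a b).resolve_left hab).resolve_right hba⟩
    haveI : IsIrrefl V r := ⟨hirr⟩
    haveI : IsTrans V r := ⟨htrans⟩
    haveI : IsStrictOrder V r := {}
    have hSTO : IsStrictTotalOrder V r := {}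
    exact ⟨Yv, hYv1, r, hSTO, fun v w hw hhtr => Or.inl (hYv2 v w hw hhtr)⟩
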